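/- For any object X in a pseudo-tensor category 𝒟, the sequence X⁰ ⊗ X ⊗ γ_X obtained by tensoring γ_X : X⁰XX⁰X →^{ℰ_X} X⁰X →^{ev_X} 𝟙 → 0 with X⁰ ⊗ X on the left is split exact, i.e., X⁰X ⊗ ev_X is a split epimorphism whose kernel is split off, with X⁰X ⊗ ℰ_X mapping onto that kernel via a split epimorphism. -/

import Mathlib

open CategoryTheory CategoryTheory.Limits CategoryTheory.MonoidalCategory

universe v u

/-- A morphism `f` is split if there is `g` with `f ∘ g ∘ f = f`. -/
def IsSplit {C : Type u} [Category.{v} C] {X Y : C} (f : X ⟶ Y) : Prop :=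
  ∃ g : Y ⟶ X, f ≫ g ≫ f = f

/-- The sequence `X₂ ⟶ X₁ ⟶ X₀ ⟶ 0` is exact, i.e. `q` is a cokernel of `p`. -/
def IsCokernelSeq {C : Type u} [Category.{v} C] [Preadditive C] {X₂ X₁ X₀ : C}
    (p : X₂ ⟶ X₁) (q : X₁ ⟶ X₀) : Prop :=
  p ≫ q = 0 ∧ ∀ ⦃A : C⦄ (h : X₁ ⟶ A), p ≫ h = 0 → ∃! t : X₀ ⟶ A, q ≫ t = h

/-- The sequence `0 ⟶ X₀ ⟶ X₁ ⟶ X₂` is exact, i.e. `i` is a kernel of `p`. -/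
def IsKernelSeq {C : Type u} [Category.{v} C] [Preadditive C] {X₀ X₁ X₂ : C}
    (i : X₀ ⟶ X₁) (p : X₁ ⟶ X₂) : Prop :=
  i ≫ p = 0 ∧ ∀ ⦃A : C⦄ (h : A ⟶ X₁), h ≫ p = 0 → ∃! t : A ⟶ X₀, t ≫ i = h

/-- The morphism `ℰ_X = ev_X ⊗ id_{X⁰⊗X} − id_{X⁰⊗X} ⊗ ev_X`. -/
def calE {C : Type u} [Category.{v} C] [Preadditive C] [MonoidalCategory C]
    (X Xd : C) [ExactPairing X Xd] : (Xd ⊗ X) ⊗ (Xd ⊗ X) ⟶ Xd ⊗ X :=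
  (ε_ X Xd ▷ (Xd ⊗ X)) ≫ (λ_ (Xd ⊗ X)).hom -
    ((Xd ⊗ X) ◁ ε_ X Xd) ≫ (ρ_ (Xd ⊗ X)).hom

/-- `X` (with chosen dual `Xd`) is strongly faithful: `ev_X` is the cokernel of `ℰ_X`. -/
def StronglyFaithful {C : Type u} [Category.{v} C] [Preadditive C]
    [MonoidalCategory C] (X Xd : C) [ExactPairing X Xd] : Prop :=
  IsCokernelSeq (calE X Xd) (ε_ X Xd)

namespace Stmt18Aux

variable {C : Type u} [Category.{v} C] [MonoidalCategory C] (X Xd : C) [ExactPairing X Xd]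

/-- The "insert a coevaluation in the middle" map `Xd ⊗ X ⟶ (Xd ⊗ X) ⊗ (Xd ⊗ X)`. -/
def mmap : Xd ⊗ X ⟶ (Xd ⊗ X) ⊗ (Xd ⊗ X) :=
  (Xd ◁ ((λ_ X).inv ≫ (η_ X Xd ▷ X) ≫ (α_ X Xd X).hom)) ≫ (α_ Xd X (Xd ⊗ X)).inv

lemma mmapA : mmap X Xd ≫ ((Xd ⊗ X) ◁ ε_ X Xd) = (ρ_ (Xd ⊗ X)).inv := by
  simp [mmap]
  calc Xd ◁ (λ_ X).inv ≫ Xd ◁ η_ X Xd ▷ X ≫ Xd ◁ (α_ X Xd X).hom ≫ Xd ◁ X ◁ ε_ X Xd ≫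
        (α_ Xd X (𝟙_ C)).inv
      = Xd ◁ ((λ_ X).inv ≫ (η_ X Xd ▷ X ≫ (α_ X Xd X).hom ≫ X ◁ ε_ X Xd)) ≫
        (α_ Xd X (𝟙_ C)).inv := by
        simp only [MonoidalCategory.whiskerLeft_comp, Category.assoc]
    _ = (ρ_ (Xd ⊗ X)).inv := by
        rw [ExactPairing.evaluation_coevaluation]
        monoidal

lemma mmapB : mmap X Xd ≫ (ε_ X Xd ▷ (Xd ⊗ X)) = (λ_ (Xd ⊗ X)).inv := by
  simp [mmap]
  calc Xd ◁ (λ_ X).inv ≫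
      Xd ◁ η_ X Xd ▷ X ≫ (α_ Xd (X ⊗ Xd) X).inv ≫ (α_ Xd X Xd).inv ▷ X ≫ ε_ X Xd ▷ Xd ▷ X ≫
        (α_ (𝟙_ C) Xd X).hom
      = ((ρ_ Xd).inv ▷ X) ≫ ((Xd ◁ η_ X Xd) ≫ (α_ Xd X Xd).inv ≫ (ε_ X Xd ▷ Xd)) ▷ X ≫
        (α_ (𝟙_ C) Xd X).hom := by
        simp only [comp_whiskerRight, Category.assoc]
        monoidal
    _ = (λ_ (Xd ⊗ X)).inv := by
        rw [ExactPairing.coevaluation_evaluation]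
        monoidal

lemma hom1 : (mmap X Xd ▷ (Xd ⊗ X)) ≫ (α_ (Xd ⊗ X) (Xd ⊗ X) (Xd ⊗ X)).hom
    ≫ ((Xd ⊗ X) ◁ ((ε_ X Xd ▷ (Xd ⊗ X)) ≫ (λ_ (Xd ⊗ X)).hom))
    = 𝟙 ((Xd ⊗ X) ⊗ (Xd ⊗ X)) := by
  set W := Xd ⊗ X
  calc (mmap X Xd ▷ W) ≫ (α_ W W W).hom ≫ (W ◁ ((ε_ X Xd ▷ W) ≫ (λ_ W).hom))
      = (mmap X Xd ▷ W) ≫ ((W ◁ ε_ X Xd) ▷ W) ≫ (α_ W (𝟙_ C) W).hom ≫ (W ◁ (λ_ W).hom) := by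
        simp only [MonoidalCategory.whiskerLeft_comp]
        rw [← associator_naturality_middle_assoc]
    _ = ((mmap X Xd ≫ (W ◁ ε_ X Xd)) ▷ W) ≫ ((ρ_ W).hom ▷ W) := by
        rw [triangle]
        simp
    _ = 𝟙 (W ⊗ W) := by rw [mmapA]; simp; rfl

lemma hom2 : (mmap X Xd ▷ (Xd ⊗ X)) ≫ (α_ (Xd ⊗ X) (Xd ⊗ X) (Xd ⊗ X)).hom
    ≫ ((Xd ⊗ X) ◁ (((Xd ⊗ X) ◁ ε_ X Xd) ≫ (ρ_ (Xd ⊗ X)).hom))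
    = ((Xd ⊗ X) ◁ ε_ X Xd) ≫ (ρ_ (Xd ⊗ X)).hom ≫ mmap X Xd := by
  set W := Xd ⊗ X
  calc (mmap X Xd ▷ W) ≫ (α_ W W W).hom ≫ (W ◁ ((W ◁ ε_ X Xd) ≫ (ρ_ W).hom))
      = (mmap X Xd ▷ W) ≫ ((W ⊗ W) ◁ ε_ X Xd) ≫ (α_ W W (𝟙_ C)).hom ≫ (W ◁ (ρ_ W).hom) := by
        simp only [MonoidalCategory.whiskerLeft_comp]
        rw [← associator_naturality_right_assoc]
    _ = (mmap X Xd ▷ W) ≫ ((W ⊗ W) ◁ ε_ X Xd) ≫ (ρ_ (W ⊗ W)).hom := by monoidal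
    _ = (W ◁ ε_ X Xd) ≫ (mmap X Xd ▷ 𝟙_ C) ≫ (ρ_ (W ⊗ W)).hom := by
        rw [← whisker_exchange_assoc]
    _ = (W ◁ ε_ X Xd) ≫ (ρ_ W).hom ≫ mmap X Xd := by
        rw [rightUnitor_naturality]

lemma wl_sub {C : Type u} [Category.{v} C] [Preadditive C] [MonoidalCategory C]
    [MonoidalPreadditive C] (W : C) {A B : C} (f g : A ⟶ B) :
    W ◁ (f - g) = W ◁ f - W ◁ g := by
  rw [eq_sub_iff_add_eq, ← MonoidalPreadditive.whiskerLeft_add, sub_add_cancel]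

end Stmt18Aux

/-- The sequence `X⁰ ⊗ X ⊗ γ_X` is split exact: it is exact, and it is
contractible via one-sided inverses exhibiting direct sum decompositions. -/
theorem stmt18 {k : Type*} [Field k] {C : Type u} [Category.{v} C] [Preadditive C]
    [Linear k C] [MonoidalCategory C] [SymmetricCategory C] [MonoidalPreadditive C]
    [MonoidalLinear k C] [RigidCategory C] [IsIdempotentComplete C]
    (hEnd : Function.Bijective fun a : k => a • (𝟙 (𝟙_ C)))
    (X Xd : C) [ExactPairing X Xd] :
    IsCokernelSeq ((Xd ⊗ X) ◁ calE X Xd) ((Xd ⊗ X) ◁ ε_ X Xd) ∧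
      ∃ (s : (Xd ⊗ X) ⊗ 𝟙_ C ⟶ (Xd ⊗ X) ⊗ (Xd ⊗ X))
        (t : (Xd ⊗ X) ⊗ (Xd ⊗ X) ⟶ (Xd ⊗ X) ⊗ ((Xd ⊗ X) ⊗ (Xd ⊗ X))),
        s ≫ ((Xd ⊗ X) ◁ ε_ X Xd) = 𝟙 ((Xd ⊗ X) ⊗ 𝟙_ C) ∧
        t ≫ ((Xd ⊗ X) ◁ calE X Xd) + ((Xd ⊗ X) ◁ ε_ X Xd) ≫ s
          = 𝟙 ((Xd ⊗ X) ⊗ (Xd ⊗ X)) := by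
  classical
  set W := Xd ⊗ X with hW
  set s : W ⊗ 𝟙_ C ⟶ W ⊗ W := (ρ_ W).hom ≫ Stmt18Aux.mmap X Xd with hsdef
  set t : W ⊗ W ⟶ W ⊗ (W ⊗ W) :=
    (Stmt18Aux.mmap X Xd ▷ W) ≫ (α_ W W W).hom with htdef
  have hs : s ≫ (W ◁ ε_ X Xd) = 𝟙 (W ⊗ 𝟙_ C) := by
    rw [hsdef, Category.assoc, Stmt18Aux.mmapA, Iso.hom_inv_id]
  have hcalE : W ◁ calE X Xd
      = (W ◁ ((ε_ X Xd ▷ W) ≫ (λ_ W).hom)) - (W ◁ ((W ◁ ε_ X Xd) ≫ (ρ_ W).hom)) := by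
    rw [calE, Stmt18Aux.wl_sub]
  have hht : t ≫ (W ◁ calE X Xd) + (W ◁ ε_ X Xd) ≫ s = 𝟙 (W ⊗ W) := by
    rw [hcalE, Preadditive.comp_sub, htdef, Category.assoc, Category.assoc,
      ← Category.assoc _ _ (W ◁ ((ε_ X Xd ▷ W) ≫ (λ_ W).hom)),
      ← Category.assoc _ _ (W ◁ ((W ◁ ε_ X Xd) ≫ (ρ_ W).hom))]
    rw [Category.assoc, Category.assoc]
    rw [Stmt18Aux.hom1, Stmt18Aux.hom2]
    rw [hsdef]
    abel
  have hE0 : calE X Xd ≫ ε_ X Xd = 0 := by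
    have h : (ε_ X Xd ▷ W) ≫ (λ_ W).hom ≫ ε_ X Xd
        = (W ◁ ε_ X Xd) ≫ (ρ_ W).hom ≫ ε_ X Xd := by
      rw [← leftUnitor_naturality, ← rightUnitor_naturality, ← whisker_exchange_assoc,
        unitors_equal]
    rw [calE, Preadditive.sub_comp, Category.assoc, Category.assoc, h, sub_self]
  have hpq : (W ◁ calE X Xd) ≫ (W ◁ ε_ X Xd) = 0 := by
    rw [← MonoidalCategory.whiskerLeft_comp, hE0, MonoidalPreadditive.whiskerLeft_zero]
  refine ⟨⟨hpq, ?_⟩, s, t, hs, hht⟩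
  intro A h hh
  refine ⟨s ≫ h, ?_, ?_⟩
  · show (W ◁ ε_ X Xd) ≫ (s ≫ h) = h
    have : (W ◁ ε_ X Xd) ≫ s = 𝟙 (W ⊗ W) - t ≫ (W ◁ calE X Xd) := by
      rw [eq_sub_iff_add_eq, add_comm, hht]
    rw [← Category.assoc, this, Preadditive.sub_comp, Category.id_comp, Category.assoc,
      hh, comp_zero, sub_zero]
  · intro y hy
    have hy' : (W ◁ ε_ X Xd) ≫ y = h := hy
    have : s ≫ (W ◁ ε_ X Xd) ≫ y = s ≫ h := by rw [hy']
    rwa [← Category.assoc, hs, Category.id_comp] at this
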